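/- For an odd prime p, (p-1)!! ≡ sf(p-1) ≡ (-1)^((p-1)/2) · H(p-1) (mod p). -/

import Mathlib

def hyperfactorial (n : ℕ) : ℕ := ∏ k ∈ Finset.Icc 1 n, k ^ k

def sf (n : ℕ) : ℕ := ∏ k ∈ Finset.Icc 1 n, Nat.factorial k

lemma neg_one_pow_congr_mod2 {R : Type*} [Monoid R] [HasDistribNeg R] {a b : ℕ}
    (h : a % 2 = b % 2) : (-1 : R) ^ a = (-1) ^ b := by
  rw [← Nat.div_add_mod a 2, ← Nat.div_add_mod b 2, pow_add, pow_add, pow_mul, pow_mul, h]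
  simp

lemma prod_Icc_one {M : Type*} [CommMonoid M] (f : ℕ → M) (n : ℕ) :
    ∏ k ∈ Finset.Icc 1 n, f k = ∏ i ∈ Finset.range n, f (i + 1) := by
  rw [← Finset.Ico_add_one_right_eq_Icc, Finset.prod_Ico_eq_prod_range]
  simp [add_comm]

lemma sf_mul_hyperfactorial (n : ℕ) :
    sf n * hyperfactorial n = (Nat.factorial n) ^ (n + 1) := by
  induction n with
  | zero => simp [sf, hyperfactorial]
  | succ n ih =>
    rw [sf, hyperfactorial, Finset.prod_Icc_succ_top (by omega),
      Finset.prod_Icc_succ_top (by omega)]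
    have h1 : (∏ k ∈ Finset.Icc 1 n, Nat.factorial k) = sf n := rfl
    have h2 : (∏ k ∈ Finset.Icc 1 n, k ^ k) = hyperfactorial n := rfl
    rw [h1, h2, Nat.factorial_succ, mul_pow, pow_succ (n+1) (n+1)]
    calc sf n * ((n+1) * Nat.factorial n) * (hyperfactorial n * (n+1)^(n+1))
        = (sf n * hyperfactorial n) * Nat.factorial n * ((n+1)^(n+1) * (n+1)) := by ring
      _ = Nat.factorial n ^ (n+1) * Nat.factorial n * ((n+1)^(n+1) * (n+1)) := by rw [ih]
      _ = (n+1)^(n+1) * (n+1) * Nat.factorial n ^ (n+1+1) := by ring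

section
variable {p m : ℕ} [Fact p.Prime]

lemma cast_pair (hm : p = 2*m+1) {a b : ℕ} (hab : a + b = p) :
    ((a : ℕ) : ZMod p) = -((b : ℕ) : ZMod p) := by
  apply eq_neg_of_add_eq_zero_left
  rw [← Nat.cast_add, hab, ZMod.natCast_self]

lemma prod_range_sub_eq_factorial (m : ℕ) :
    (∏ j ∈ Finset.range m, (m - j)) = Nat.factorial m := by
  rw [← Finset.prod_range_add_one_eq_factorial, ← Finset.prod_range_reflect (fun j => j + 1) m]
  apply Finset.prod_congr rfl
  intro j hj
  simp only [Finset.mem_range] at hj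
  omega

lemma factorial_half_sq (hm : p = 2*m+1) :
    ((Nat.factorial m : ZMod p)) ^ 2 = (-1) ^ (m + 1) := by
  have hw : ((Nat.factorial (p-1) : ℕ) : ZMod p) = -1 := ZMod.wilsons_lemma p
  have h1 : ((Nat.factorial (p-1) : ℕ) : ZMod p)
      = ∏ i ∈ Finset.range (m + m), ((i+1 : ℕ) : ZMod p) := by
    rw [← Finset.prod_range_add_one_eq_factorial, show p - 1 = m + m by omega]
    push_cast
    rfl
  rw [h1, Finset.prod_range_add] at hw
  have h2 : (∏ i ∈ Finset.range m, ((i+1 : ℕ) : ZMod p))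
      = ∏ j ∈ Finset.range m, ((m - j : ℕ) : ZMod p) := by
    rw [← Finset.prod_range_reflect (fun j => ((j+1 : ℕ) : ZMod p)) m]
    apply Finset.prod_congr rfl
    intro j hj
    simp only [Finset.mem_range] at hj
    congr 1
    omega
  rw [h2, ← Finset.prod_mul_distrib] at hw
  have h3 : ∀ j ∈ Finset.range m,
      ((m - j : ℕ) : ZMod p) * ((m + j + 1 : ℕ) : ZMod p)
        = -(((m - j : ℕ) : ZMod p))^2 := by
    intro j hj
    simp only [Finset.mem_range] at hj
    have : ((m + j + 1 : ℕ) : ZMod p) = -((m - j : ℕ) : ZMod p) :=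
      cast_pair hm (by omega)
    rw [this]
    ring
  rw [Finset.prod_congr rfl h3] at hw
  have h4 : (∏ j ∈ Finset.range m, -(((m - j : ℕ) : ZMod p))^2)
      = (-1)^m * ((Nat.factorial m : ZMod p))^2 := by
    simp only [neg_eq_neg_one_mul ((_ : ZMod p)^2)]
    rw [Finset.prod_mul_distrib, Finset.prod_const, Finset.card_range, Finset.prod_pow,
      ← Nat.cast_prod, prod_range_sub_eq_factorial]
  rw [h4] at hw
  have h5 : ((-1 : ZMod p)^m) * ((-1 : ZMod p)^m * (Nat.factorial m : ZMod p)^2)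
      = (-1)^m * (-1) := by rw [hw]
  rw [← mul_assoc, ← pow_add, Even.neg_one_pow ⟨m, rfl⟩, one_mul, ← pow_succ] at h5
  exact h5

lemma hyper_val (hm : p = 2*m+1) :
    ((hyperfactorial (p-1) : ℕ) : ZMod p)
      = (-1) ^ (m*(m+1) + m*(m-1)/2) * ((Nat.factorial m : ℕ) : ZMod p) := by
  have h0 : ((hyperfactorial (p-1) : ℕ) : ZMod p)
      = ∏ i ∈ Finset.range (m + m), ((i+1 : ℕ) : ZMod p)^(i+1) := by
    rw [hyperfactorial, show p - 1 = m + m by omega, prod_Icc_one]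
    push_cast
    rfl
  rw [h0, Finset.prod_range_add]
  have h2 : (∏ i ∈ Finset.range m, ((i+1 : ℕ) : ZMod p)^(i+1))
      = ∏ j ∈ Finset.range m, ((m - j : ℕ) : ZMod p)^(m-j) := by
    rw [← Finset.prod_range_reflect (fun j => ((j+1 : ℕ) : ZMod p)^(j+1)) m]
    apply Finset.prod_congr rfl
    intro j hj
    simp only [Finset.mem_range] at hj
    have he : m - 1 - j + 1 = m - j := by omega
    rw [he]
  rw [h2, ← Finset.prod_mul_distrib]
  have h3 : ∀ j ∈ Finset.range m,
      ((m - j : ℕ) : ZMod p)^(m-j) * ((m + j + 1 : ℕ) : ZMod p)^(m + j + 1)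
        = (-1)^(m + j + 1) * ((m - j : ℕ) : ZMod p) := by
    intro j hj
    simp only [Finset.mem_range] at hj
    have hc : ((m + j + 1 : ℕ) : ZMod p) = -((m - j : ℕ) : ZMod p) :=
      cast_pair hm (by omega)
    rw [hc, neg_pow, mul_left_comm, ← pow_add,
      show m - j + (m + j + 1) = p by omega, ZMod.pow_card]
  rw [Finset.prod_congr rfl h3, Finset.prod_mul_distrib, Finset.prod_pow_eq_pow_sum,
    ← Nat.cast_prod, prod_range_sub_eq_factorial]
  have hS : (∑ x ∈ Finset.range m, (m + x + 1)) = m*(m+1) + m*(m-1)/2 := by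
    have h6 : (∑ x ∈ Finset.range m, (m + x + 1))
        = (∑ x ∈ Finset.range m, (m + 1)) + ∑ x ∈ Finset.range m, x := by
      rw [← Finset.sum_add_distrib]
      exact Finset.sum_congr rfl fun x _ => by omega
    rw [h6, Finset.sum_const, Finset.card_range, smul_eq_mul, Finset.sum_range_id]
  rw [hS]

lemma two_pow_half (hm : p = 2*m+1) (hm1 : 1 ≤ m) :
    (2 : ZMod p) ^ m = (-1) ^ (m*(m+1)/2) := by
  have hp : p.Prime := Fact.out
  have hne2 : p ≠ 2 := by omega
  have h20 : (2 : ZMod p) ≠ 0 := by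
    have h2 : ((2:ℕ) : ZMod p) ≠ 0 := by
      rw [Ne, ZMod.natCast_eq_zero_iff]
      intro h
      have := Nat.le_of_dvd (by norm_num) h
      omega
    simpa using h2
  have hx : (2 : ZMod p)^m * (2 : ZMod p)^m = 1 := by
    rw [← pow_add, show m + m = p - 1 by omega]
    exact ZMod.pow_card_sub_one_eq_one h20
  have hx' := mul_self_eq_one_iff.mp hx
  have heuler : IsSquare (2 : ZMod p) ↔ (2:ZMod p)^m = 1 := by
    rw [ZMod.euler_criterion (p := p) h20, show p/2 = m by omega]
  have hsq := ZMod.exists_sq_eq_two_iff hne2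
  obtain ⟨t, ht⟩ := Nat.even_mul_succ_self m
  rw [ht, show (t + t)/2 = t by omega]
  have hp8 : p % 8 = 1 ∨ p % 8 = 3 ∨ p % 8 = 5 ∨ p % 8 = 7 := by omega
  set q := m / 4 with hq
  rcases hp8 with h8 | h8 | h8 | h8
  · have hm4 : m = 4*q := by omega
    obtain ⟨w, hw⟩ : ∃ w, m*(m+1) = 4*w := ⟨4*q*q + q, by rw [hm4]; ring⟩
    rw [ht] at hw
    have h1 : (2:ZMod p)^m = 1 := heuler.mp (hsq.mpr (Or.inl h8))
    rw [h1, Even.neg_one_pow (Nat.even_iff.mpr (by omega))]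
  · have hm4 : m = 4*q + 1 := by omega
    obtain ⟨w, hw⟩ : ∃ w, m*(m+1) = 4*w + 2 := ⟨4*q*q + 3*q, by rw [hm4]; ring⟩
    rw [ht] at hw
    have hns : ¬ IsSquare (2 : ZMod p) := by rw [hsq]; omega
    have h1 : (2:ZMod p)^m = -1 := by
      rcases hx' with h1 | h1
      · exact absurd (heuler.mpr h1) hns
      · exact h1
    rw [h1, Odd.neg_one_pow (Nat.odd_iff.mpr (by omega))]
  · have hm4 : m = 4*q + 2 := by omega
    obtain ⟨w, hw⟩ : ∃ w, m*(m+1) = 4*w + 2 := ⟨4*q*q + 5*q + 1, by rw [hm4]; ring⟩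
    rw [ht] at hw
    have hns : ¬ IsSquare (2 : ZMod p) := by rw [hsq]; omega
    have h1 : (2:ZMod p)^m = -1 := by
      rcases hx' with h1 | h1
      · exact absurd (heuler.mpr h1) hns
      · exact h1
    rw [h1, Odd.neg_one_pow (Nat.odd_iff.mpr (by omega))]
  · have hm4 : m = 4*q + 3 := by omega
    obtain ⟨w, hw⟩ : ∃ w, m*(m+1) = 4*w := ⟨4*q*q + 7*q + 3, by rw [hm4]; ring⟩
    rw [ht] at hw
    have h1 : (2:ZMod p)^m = 1 := heuler.mp (hsq.mpr (Or.inr h8))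
    rw [h1, Even.neg_one_pow (Nat.even_iff.mpr (by omega))]

end

theorem stmt12 (p : ℕ) (hp : p.Prime) (hodd : Odd p) :
    (Nat.doubleFactorial (p - 1) : ZMod p) = (sf (p - 1) : ZMod p) ∧
    (sf (p - 1) : ZMod p) = (-1) ^ ((p - 1) / 2) * (hyperfactorial (p - 1) : ZMod p) := by
  haveI := Fact.mk hp
  have hodd' := Nat.odd_iff.mp hodd
  obtain ⟨m, hm⟩ : ∃ m, p = 2*m+1 := ⟨p/2, by omega⟩
  have hm1 : 1 ≤ m := by
    rcases Nat.eq_zero_or_pos m with h | h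
    · exfalso; rw [h] at hm; exact Nat.Prime.one_lt hp |>.ne' (by omega)
    · exact h
  have hp1 : p - 1 = 2*m := by omega
  have hfs : ((Nat.factorial m : ℕ) : ZMod p)^2 = (-1)^(m+1) := factorial_half_sq hm
  have hH : ((hyperfactorial (p-1) : ℕ) : ZMod p)
      = (-1)^(m*(m+1) + m*(m-1)/2) * ((Nat.factorial m : ℕ) : ZMod p) := hyper_val hm
  have h2p : (2:ZMod p)^m = (-1)^(m*(m+1)/2) := two_pow_half hm hm1
  -- arithmetic helper facts
  obtain ⟨t, ht⟩ := Nat.even_mul_succ_self m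
  obtain ⟨svar, hs⟩ : ∃ s, m*(m-1) = s + s := by
    rcases Nat.even_mul_succ_self (m-1) with ⟨s, hs⟩
    exact ⟨s, by rw [show m*(m-1) = (m-1)*(m-1+1) by rw [Nat.sub_add_cancel hm1]; ring, hs]⟩
  have hts : t = svar + m := by
    have : m*(m+1) = m*(m-1) + 2*m := by
      cases m with
      | zero => simp
      | succ k => simp [Nat.succ_sub_one]; ring
    omega
  have hT2 : m*(m+1)/2 = t := by omega
  have hS2 : m*(m-1)/2 = svar := by omega
  have hsfH : (sf (p-1) : ZMod p) * ((hyperfactorial (p-1) : ℕ) : ZMod p) = -1 := by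
    have h0 : ((sf (p-1) * hyperfactorial (p-1) : ℕ) : ZMod p)
        = ((Nat.factorial (p-1) : ℕ) : ZMod p)^(p-1+1) := by
      rw [sf_mul_hyperfactorial]; push_cast; ring
    rw [Nat.cast_mul] at h0
    rw [h0, ZMod.wilsons_lemma]
    rw [show p - 1 + 1 = p by omega]
    exact Odd.neg_one_pow hodd
  have hMu : IsUnit ((-1 : ZMod p)) := isUnit_one.neg
  have hM0 : ((Nat.factorial m : ℕ) : ZMod p) ≠ 0 := by
    intro h
    rw [h] at hfs
    exact (hMu.pow (m+1)).ne_zero (by simpa using hfs.symm)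
  have hH0 : ((hyperfactorial (p-1) : ℕ) : ZMod p) ≠ 0 := by
    rw [hH]
    exact mul_ne_zero (hMu.pow _).ne_zero hM0
  have hsf : (sf (p-1) : ZMod p) = (-1)^(m*(m+1)/2) * ((Nat.factorial m : ℕ) : ZMod p) := by
    apply mul_right_cancel₀ hH0
    rw [hsfH, hH]
    have : ((-1 : ZMod p))^(m*(m+1)/2) * ((Nat.factorial m : ℕ) : ZMod p)
        * ((-1)^(m*(m+1) + m*(m-1)/2) * ((Nat.factorial m : ℕ) : ZMod p))
        = (-1)^(m*(m+1)/2 + (m*(m+1) + m*(m-1)/2)) * (((Nat.factorial m : ℕ) : ZMod p))^2 := by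
      rw [pow_add]; ring
    rw [this, hfs, ← pow_add]
    rw [neg_one_pow_congr_mod2 (b := 1) (by omega), pow_one]
  constructor
  · rw [hp1, Nat.doubleFactorial_two_mul, ← hp1, hsf]
    push_cast
    rw [h2p]
  · rw [hsf, hH, show (p-1)/2 = m by omega]
    rw [show ((-1 : ZMod p))^m * ((-1)^(m*(m+1) + m*(m-1)/2) * ((Nat.factorial m : ℕ) : ZMod p))
        = (-1)^(m + (m*(m+1) + m*(m-1)/2)) * ((Nat.factorial m : ℕ) : ZMod p) by
      rw [pow_add]; ring]
    rw [neg_one_pow_congr_mod2 (a := m*(m+1)/2) (b := m + (m*(m+1) + m*(m-1)/2)) (by omega)]
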